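/- The function β(x,a) := 2·arcsin(cos(π/x)/cosh(a/2)) is, for each fixed a > 0, increasing and concave in x on [3,∞): its partial derivative ∂β/∂x = 2π·sin(π/x)·x^{-2}·(cosh²(a/2) - cos²(π/x))^{-1/2} is positive, and ∂²β/∂x² < 0 for x ≥ 3. -/

import Mathlib

open Real

/-- `β(x,a) = 2·arcsin(cos(π/x)/cosh(a/2))`, for a real variable `x`. -/
noncomputable def betaR (x a : ℝ) : ℝ :=
  2 * Real.arcsin (Real.cos (π / x) / Real.cosh (a / 2))

/-- The claimed first partial derivative
`∂β/∂x = 2π·sin(π/x)·x⁻²·(cosh²(a/2) - cos²(π/x))^(-1/2)`. -/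
noncomputable def betaDx (x a : ℝ) : ℝ :=
  2 * π * Real.sin (π / x) / (x ^ 2 * Real.sqrt (Real.cosh (a / 2) ^ 2 - Real.cos (π / x) ^ 2))

lemma stmt15_aux1 (a x : ℝ) (ha : 0 < a) (hx : 3 ≤ x) :
    HasDerivAt (fun y => betaR y a) (betaDx x a) x ∧ 0 < betaDx x a := by
  simp only [betaR, betaDx]
  set c := Real.cosh (a / 2) with hc_def
  have hc : 1 < c := (Real.one_lt_cosh).2 (by positivity)
  have hx0 : (0:ℝ) < x := by linarith
  have hπx : 0 < π / x := div_pos pi_pos hx0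
  have hπx2 : π / x < π / 2 := by
    apply div_lt_div_of_pos_left pi_pos (by norm_num) (by linarith)
  have hC : 0 < Real.cos (π / x) := Real.cos_pos_of_mem_Ioo ⟨by linarith, hπx2⟩
  have hS : 0 < Real.sin (π / x) := Real.sin_pos_of_pos_of_lt_pi hπx (by linarith [pi_pos])
  have hC1 : Real.cos (π / x) ≤ 1 := Real.cos_le_one _
  have hR2pos : 0 < c ^ 2 - Real.cos (π / x) ^ 2 := by nlinarith
  set R := Real.sqrt (c ^ 2 - Real.cos (π / x) ^ 2) with hR_def
  have hR : 0 < R := Real.sqrt_pos.2 hR2pos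
  have hR2 : R ^ 2 = c ^ 2 - Real.cos (π / x) ^ 2 := Real.sq_sqrt hR2pos.le
  constructor
  · have h1 : HasDerivAt (fun y : ℝ => π / y) (π * (-(x ^ 2)⁻¹)) x := by
      simpa [div_eq_mul_inv] using (hasDerivAt_inv hx0.ne').const_mul π
    have h2 : HasDerivAt (fun y : ℝ => Real.cos (π / y))
        (-Real.sin (π / x) * (π * (-(x ^ 2)⁻¹))) x :=
      (Real.hasDerivAt_cos (π / x)).comp x h1
    have h3 : HasDerivAt (fun y : ℝ => Real.cos (π / y) / c)
        (-Real.sin (π / x) * (π * (-(x ^ 2)⁻¹)) / c) x := h2.div_const c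
    set u := Real.cos (π / x) / c with hu_def
    have hu01 : 0 < u ∧ u < 1 := by
      constructor
      · exact div_pos hC (by linarith)
      · rw [div_lt_one (by linarith)]; linarith
    have h4 : HasDerivAt Real.arcsin (1 / Real.sqrt (1 - u ^ 2)) u :=
      Real.hasDerivAt_arcsin (by linarith [hu01.1]) (ne_of_lt hu01.2)
    have h5 := (h4.comp x h3).const_mul 2
    have hsq : Real.sqrt (1 - u ^ 2) = R / c := by
      rw [show 1 - u ^ 2 = (R / c) ^ 2 by
        rw [div_pow, div_pow, hR2]; field_simp,
        Real.sqrt_sq (by positivity)]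
    refine h5.congr_deriv ?_
    rw [hsq]
    field_simp
  · exact div_pos (by positivity) (mul_pos (by positivity) hR)

lemma stmt15_aux2 (a x : ℝ) (ha : 0 < a) (hx : 3 ≤ x) :
    ∃ d2 : ℝ, HasDerivAt (fun y => betaDx y a) d2 x ∧ d2 < 0 := by
  simp only [betaDx]
  set c := Real.cosh (a / 2) with hc_def
  have hc : 1 < c := (Real.one_lt_cosh).2 (by positivity)
  have hx0 : (0:ℝ) < x := by linarith
  have hπx : 0 < π / x := div_pos pi_pos hx0
  have hπx2 : π / x < π / 2 := by
    apply div_lt_div_of_pos_left pi_pos (by norm_num) (by linarith)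
  have hC : 0 < Real.cos (π / x) := Real.cos_pos_of_mem_Ioo ⟨by linarith, hπx2⟩
  have hS : 0 < Real.sin (π / x) := Real.sin_pos_of_pos_of_lt_pi hπx (by linarith [pi_pos])
  have hC1 : Real.cos (π / x) ≤ 1 := Real.cos_le_one _
  have hR2pos : 0 < c ^ 2 - Real.cos (π / x) ^ 2 := by nlinarith
  have hR : 0 < Real.sqrt (c ^ 2 - Real.cos (π / x) ^ 2) := Real.sqrt_pos.2 hR2pos
  have hR2 : Real.sqrt (c ^ 2 - Real.cos (π / x) ^ 2) ^ 2 = c ^ 2 - Real.cos (π / x) ^ 2 :=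
    Real.sq_sqrt hR2pos.le
  have h1 : HasDerivAt (fun y : ℝ => π / y) (π * (-(x ^ 2)⁻¹)) x := by
    simpa [div_eq_mul_inv] using (hasDerivAt_inv hx0.ne').const_mul π
  have hsin : HasDerivAt (fun y : ℝ => Real.sin (π / y))
      (Real.cos (π / x) * (π * (-(x ^ 2)⁻¹))) x := (Real.hasDerivAt_sin (π / x)).comp x h1
  have hnum := hsin.const_mul (2 * π)
  have h2 : HasDerivAt (fun y : ℝ => Real.cos (π / y))
      (-Real.sin (π / x) * (π * (-(x ^ 2)⁻¹))) x := (Real.hasDerivAt_cos (π / x)).comp x h1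
  have hh : HasDerivAt (fun y : ℝ => c ^ 2 - Real.cos (π / y) ^ 2)
      (-((2 : ℕ) * Real.cos (π / x) ^ 1 * (-Real.sin (π / x) * (π * (-(x ^ 2)⁻¹))))) x :=
    (h2.pow 2).const_sub (c ^ 2)
  have hsqrt := hh.sqrt hR2pos.ne'
  have hg := (hasDerivAt_pow 2 x).mul hsqrt
  have hg0 : x ^ 2 * Real.sqrt (c ^ 2 - Real.cos (π / x) ^ 2) ≠ 0 := by positivity
  have hdiv := hnum.div hg hg0
  refine ⟨_, hdiv, ?_⟩
  have key : (2 * π * (Real.cos (π / x) * (π * (-(x ^ 2)⁻¹))) *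
        (x ^ 2 * Real.sqrt (c ^ 2 - Real.cos (π / x) ^ 2)) -
      2 * π * Real.sin (π / x) *
        (((2:ℕ):ℝ) * x ^ (2 - 1) * Real.sqrt (c ^ 2 - Real.cos (π / x) ^ 2) +
          x ^ 2 *
            (-((2 : ℕ) * Real.cos (π / x) ^ 1 * (-Real.sin (π / x) * (π * (-(x ^ 2)⁻¹)))) /
              (2 * Real.sqrt (c ^ 2 - Real.cos (π / x) ^ 2))))) /
      (x ^ 2 * Real.sqrt (c ^ 2 - Real.cos (π / x) ^ 2)) ^ 2 =
      2 * π * (π * Real.cos (π / x) * (1 - c ^ 2) -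
        2 * x * Real.sin (π / x) * (c ^ 2 - Real.cos (π / x) ^ 2)) /
      (x ^ 4 * Real.sqrt (c ^ 2 - Real.cos (π / x) ^ 2) ^ 3) := by
    set S := Real.sin (π / x) with hS_def
    set C := Real.cos (π / x) with hC_def2
    set R := Real.sqrt (c ^ 2 - C ^ 2) with hR_def
    have hpyth : S ^ 2 + C ^ 2 = 1 := Real.sin_sq_add_cos_sq (π / x)
    rw [show (1 : ℝ) - c ^ 2 = S ^ 2 - R ^ 2 by rw [hR2]; linarith,
        show c ^ 2 - C ^ 2 = R ^ 2 from hR2.symm]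
    field_simp
    ring
  simp only [Pi.mul_apply]
  rw [key]
  apply div_neg_of_neg_of_pos
  · have t1 : 0 < π * Real.cos (π / x) * (c ^ 2 - 1) :=
      mul_pos (mul_pos pi_pos hC) (by nlinarith)
    have t2 : 0 < 2 * x * Real.sin (π / x) * (c ^ 2 - Real.cos (π / x) ^ 2) :=
      mul_pos (mul_pos (by linarith) hS) hR2pos
    nlinarith [pi_pos]
  · exact mul_pos (by positivity) (pow_pos hR 3)

/-- For fixed `a > 0`, `β(·,a)` is increasing and concave in `x` on `[3,∞)`:
its derivative is `betaDx` and is positive, and its second derivative is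
negative for `x ≥ 3`. -/
theorem stmt15 (a : ℝ) (ha : 0 < a) :
    (∀ x : ℝ, 3 ≤ x → HasDerivAt (fun y => betaR y a) (betaDx x a) x ∧ 0 < betaDx x a) ∧
    StrictMonoOn (fun x => betaR x a) (Set.Ici 3) ∧
    (∀ x : ℝ, 3 ≤ x → ∃ d2 : ℝ, HasDerivAt (fun y => betaDx y a) d2 x ∧ d2 < 0) ∧
    StrictConcaveOn ℝ (Set.Ici 3) (fun x => betaR x a) := by
  have hkey : ∀ x : ℝ, 3 ≤ x →
      HasDerivAt (fun y => betaR y a) (betaDx x a) x ∧ 0 < betaDx x a :=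
    fun x hx => stmt15_aux1 a x ha hx
  have hcont : ContinuousOn (fun x => betaR x a) (Set.Ici 3) :=
    fun x hx => ((hkey x hx).1.continuousAt).continuousWithinAt
  refine ⟨hkey, ?_, fun x hx => stmt15_aux2 a x ha hx, ?_⟩
  · apply strictMonoOn_of_deriv_pos (convex_Ici 3) hcont
    intro x hx
    rw [interior_Ici] at hx
    rw [(hkey x (le_of_lt hx)).1.deriv]
    exact (hkey x (le_of_lt hx)).2
  · apply strictConcaveOn_of_deriv2_neg (convex_Ici 3) hcont
    intro x hx
    rw [interior_Ici] at hx
    have hev : deriv (fun x => betaR x a) =ᶠ[nhds x] fun y => betaDx y a := by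
      filter_upwards [isOpen_Ioi.mem_nhds (show x ∈ Set.Ioi 3 from hx)] with y hy
      exact ((hkey y (le_of_lt hy)).1).deriv
    obtain ⟨d2, hd2, hd2neg⟩ := stmt15_aux2 a x ha (le_of_lt hx)
    have : deriv^[2] (fun x => betaR x a) x = deriv (deriv (fun x => betaR x a)) x := rfl
    rw [this, hev.deriv_eq, hd2.deriv]
    exact hd2neg
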